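/- Let λ > 0 and S₀ > 0, and let F ∈ L¹(ℝ³)³ with supp F ⊂ B_{S₀} := {y ∈ ℝ³ : |y| < S₀}. Then there exists a constant C = C(λ, S₀) > 0 such that for every x ∈ ℝ³ with |x| ≥ 2S₀: |∫_{ℝ³} ∇Φ₀(x−y) ∧ F(y) dy| ≤ C ‖F‖_{L¹(ℝ³)} |x|^{−3/2} e^{−s(λx)/(4(1+S₀))}. -/

import Mathlib

open MeasureTheory Real Set

noncomputable section

/-- Three-dimensional Euclidean space. -/
abbrev E3 : Type := EuclideanSpace ℝ (Fin 3)

/-- The wake function `s(x) = |x| + x₁`. -/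
def wake (x : E3) : ℝ := ‖x‖ + x 0

/-- The `j`-th standard basis vector of `ℝ³`. -/
def e3 (j : Fin 3) : E3 := EuclideanSpace.single j 1

/-- Euclidean norm of a triple of reals. -/
def vnorm (v : Fin 3 → ℝ) : ℝ := Real.sqrt (∑ i, v i ^ 2)

/-- The steady-state vorticity fundamental solution of the Oseen system:
`Φ₀(x) = (4π|x|)⁻¹ e^{−s(λx)/2}`. -/
def Phi0 (lam : ℝ) (x : E3) : ℝ :=
  (4 * Real.pi * ‖x‖)⁻¹ * Real.exp (-(wake (lam • x)) / 2)

/-- The gradient of `Φ₀`, as a triple of reals. -/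
def gradPhi0 (lam : ℝ) (x : E3) : Fin 3 → ℝ := fun i => fderiv ℝ (Phi0 lam) x (e3 i)

/-- The vector (cross) product on `ℝ³`. -/
def cross3 (a b : Fin 3 → ℝ) : Fin 3 → ℝ :=
  ![a 1 * b 2 - a 2 * b 1, a 2 * b 0 - a 0 * b 2, a 0 * b 1 - a 1 * b 0]

lemma hasFDerivAt_norm_E3 (z : E3) (hz : z ≠ 0) :
    HasFDerivAt (fun y : E3 => ‖y‖) (‖z‖⁻¹ • innerSL ℝ z) z := by
  have h1 : HasFDerivAt (fun y : E3 => ‖y‖ ^ 2) (2 • innerSL ℝ z) z :=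
    (hasStrictFDerivAt_norm_sq z).hasFDerivAt
  have h2 := h1.sqrt (by simpa using hz)
  have hfn : (fun y : E3 => Real.sqrt (‖y‖ ^ 2)) = fun y : E3 => ‖y‖ := by
    funext y; rw [Real.sqrt_sq (norm_nonneg _)]
  rw [hfn] at h2
  refine h2.congr_fderiv ?_
  ext v
  have hnz : ‖z‖ ≠ 0 := norm_ne_zero_iff.2 hz
  simp [Real.sqrt_sq (norm_nonneg z), smul_smul]
  field_simp
lemma phi0_eq (lam : ℝ) (hlam : 0 < lam) :
    Phi0 lam = fun y : E3 => (4 * Real.pi)⁻¹ *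
      (‖y‖⁻¹ * Real.exp (2⁻¹ * -(lam * ‖y‖ + lam * y 0))) := by
  funext y
  have h : wake (lam • y) = lam * ‖y‖ + lam * y 0 := by
    simp [wake, norm_smul, abs_of_pos hlam, PiLp.smul_apply, smul_eq_mul]
  rw [Phi0, h, mul_inv, mul_inv, mul_assoc, show -(lam * ‖y‖ + lam * y 0)/2 = 2⁻¹ * -(lam * ‖y‖ + lam * y 0) by ring]
lemma hasFDerivAt_Phi0 (lam : ℝ) (hlam : 0 < lam) (z : E3) (hz : z ≠ 0) :
    HasFDerivAt (Phi0 lam)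
      (((4 * Real.pi)⁻¹ * Real.exp (-(lam * ‖z‖ + lam * z 0) / 2) *
          (-(‖z‖ ^ 3)⁻¹ - lam / (2 * ‖z‖ ^ 2))) • innerSL ℝ z +
        ((4 * Real.pi)⁻¹ * Real.exp (-(lam * ‖z‖ + lam * z 0) / 2) *
          (-(lam / (2 * ‖z‖)))) • (EuclideanSpace.proj (0 : Fin 3) : E3 →L[ℝ] ℝ)) z := by
  have hnz : ‖z‖ ≠ 0 := norm_ne_zero_iff.2 hz
  have hn := hasFDerivAt_norm_E3 z hz
  have hp : HasFDerivAt (fun y : E3 => y 0)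
      (EuclideanSpace.proj (0 : Fin 3) : E3 →L[ℝ] ℝ) z :=
    (EuclideanSpace.proj (0 : Fin 3) : E3 →L[ℝ] ℝ).hasFDerivAt
  have hinv : HasFDerivAt (fun y : E3 => ‖y‖⁻¹) ((-(‖z‖ ^ 2)⁻¹) • (‖z‖⁻¹ • innerSL ℝ z)) z := (hasDerivAt_inv hnz).comp_hasFDerivAt z hn
  have hexp := (((hn.const_mul lam).add (hp.const_mul lam)).neg.const_mul (2⁻¹:ℝ)).exp
  have hmul := hinv.mul hexp
  have hfin := hmul.const_mul ((4 * Real.pi)⁻¹)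
  rw [phi0_eq lam hlam]
  refine hfin.congr_fderiv ?_
  ext v
  have hpi : Real.pi ≠ 0 := Real.pi_ne_zero
  simp [ContinuousLinearMap.smul_apply, ContinuousLinearMap.add_apply, smul_smul]
  field_simp
  ring
lemma vnorm_eq (v : Fin 3 → ℝ) : vnorm v = ‖(WithLp.equiv 2 (Fin 3 → ℝ)).symm v‖ := by
  rw [EuclideanSpace.norm_eq, vnorm]
  congr 1
  refine Finset.sum_congr rfl fun i _ => ?_
  rw [Real.norm_eq_abs, sq_abs]; rfl
lemma coord_le_norm (z : E3) (i : Fin 3) : |z i| ≤ ‖z‖ := by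
  have h := abs_real_inner_le_norm z (e3 i)
  rw [e3, EuclideanSpace.inner_single_right] at h
  simpa [EuclideanSpace.norm_single] using h
lemma wake_nonneg (z : E3) : 0 ≤ wake z := by
  have := coord_le_norm z 0
  rw [abs_le] at this
  unfold wake; linarith [this.1]
lemma norm_u (z : E3) (hz : z ≠ 0) :
    ‖(‖z‖⁻¹ • z + e3 0 : E3)‖ = Real.sqrt (2 * wake z / ‖z‖) := by
  have hnz : ‖z‖ ≠ 0 := norm_ne_zero_iff.2 hz
  rw [← Real.sqrt_sq (norm_nonneg (‖z‖⁻¹ • z + e3 0 : E3)), norm_add_sq_real]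
  congr 1
  have h1 : ‖(‖z‖⁻¹ • z : E3)‖ = 1 := by
    rw [norm_smul]; simp [abs_of_nonneg (inv_nonneg.2 (norm_nonneg z)), inv_mul_cancel₀ hnz]
  have h2 : (inner ℝ (‖z‖⁻¹ • z : E3) (e3 0) : ℝ) = ‖z‖⁻¹ * z 0 := by
    rw [real_inner_smul_left, e3, EuclideanSpace.inner_single_right]
    simp
  have h3 : ‖(e3 0 : E3)‖ = 1 := by simp [e3, EuclideanSpace.norm_single]
  rw [h1, h2, h3, wake]
  field_simp
  ring
lemma grad_eq (lam : ℝ) (hlam : 0 < lam) (z : E3) (hz : z ≠ 0) :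
    (WithLp.equiv 2 (Fin 3 → ℝ)).symm (gradPhi0 lam z) =
      (-((4 * Real.pi)⁻¹ * Real.exp (-(lam * ‖z‖ + lam * z 0) / 2) * (‖z‖ ^ 3)⁻¹)) • z +
      (-((4 * Real.pi)⁻¹ * Real.exp (-(lam * ‖z‖ + lam * z 0) / 2) * (lam / (2 * ‖z‖)))) •
        ((‖z‖⁻¹ • z + e3 0 : E3)) := by
  have hD := (hasFDerivAt_Phi0 lam hlam z hz).fderiv
  have hnz : ‖z‖ ≠ 0 := norm_ne_zero_iff.2 hz
  ext i
  have lhs : (WithLp.equiv 2 (Fin 3 → ℝ)).symm (gradPhi0 lam z) i = gradPhi0 lam z i := rfl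
  rw [lhs]
  rw [show gradPhi0 lam z i = fderiv ℝ (Phi0 lam) z (e3 i) from rfl, hD]
  simp only [ContinuousLinearMap.add_apply, ContinuousLinearMap.smul_apply, smul_eq_mul,
    innerSL_apply_apply, PiLp.proj_apply, PiLp.add_apply, PiLp.smul_apply, e3,
    EuclideanSpace.inner_single_right, EuclideanSpace.single_apply, RCLike.star_def,
    conj_trivial, one_mul, EuclideanSpace.proj]
  by_cases h : i = 0
  · simp only [h, if_pos rfl]
    field_simp; ring
  · rw [if_neg (Ne.symm h), if_neg h]
    field_simp; ring
lemma texp_le (lam q : ℝ) (hlam : 0 < lam) (hq : 0 ≤ q) :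
    Real.sqrt (2*q) * Real.exp (-(lam*q)/4) ≤ 2 / Real.sqrt lam := by
  have h1 : Real.exp (-(lam*q)/4) = Real.sqrt (Real.exp (-(lam*q)/2)) := by
    rw [← Real.sqrt_sq (Real.exp_nonneg (-(lam*q)/4)), sq, ← Real.exp_add]
    ring_nf
  rw [h1, ← Real.sqrt_mul (by positivity)]
  have hE : (0:ℝ) < Real.exp (lam*q/2) := Real.exp_pos _
  have h3 := Real.add_one_le_exp (lam*q/2)
  have h4 : Real.exp (-(lam*q)/2) = (Real.exp (lam*q/2))⁻¹ := by
    rw [← Real.exp_neg]; ring_nf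
  have h2 : 2*q*Real.exp (-(lam*q)/2) ≤ 4/lam := by
    rw [h4, ← div_eq_mul_inv, div_le_div_iff₀ hE hlam]
    nlinarith
  have h5 : (4:ℝ)/lam = (2/Real.sqrt lam)^2 := by
    rw [div_pow, Real.sq_sqrt hlam.le]; norm_num
  calc Real.sqrt (2*q*Real.exp (-(lam*q)/2)) ≤ Real.sqrt ((2/Real.sqrt lam)^2) := by
        rw [← h5]; exact Real.sqrt_le_sqrt h2
    _ = 2/Real.sqrt lam := Real.sqrt_sq (by positivity)
lemma vnorm_grad_le (lam : ℝ) (hlam : 0 < lam) (z : E3) (hz : z ≠ 0) :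
    vnorm (gradPhi0 lam z) ≤ (4*Real.pi)⁻¹ * Real.exp (-(lam*‖z‖+lam*z 0)/2) *
      ((‖z‖^2)⁻¹ + lam/(2*‖z‖) * Real.sqrt (2 * wake z / ‖z‖)) := by
  have hr : 0 < ‖z‖ := norm_pos_iff.2 hz
  rw [vnorm_eq, grad_eq lam hlam z hz]
  refine (norm_add_le _ _).trans ?_
  rw [norm_smul, norm_smul, norm_u z hz, Real.norm_eq_abs, Real.norm_eq_abs, abs_neg, abs_neg,
    abs_of_nonneg (by positivity),
    abs_of_nonneg (mul_nonneg (mul_nonneg (by positivity) (Real.exp_nonneg _))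
      (div_nonneg hlam.le (by positivity)))]
  apply le_of_eq
  field_simp
lemma grad_decay (lam : ℝ) (hlam : 0 < lam) (S₀ : ℝ) (hS : 0 < S₀) (z : E3) (hz : S₀ ≤ ‖z‖) :
    vnorm (gradPhi0 lam z) ≤
      (4*Real.pi)⁻¹ * ((Real.sqrt S₀)⁻¹ + Real.sqrt lam) * (‖z‖ * Real.sqrt ‖z‖)⁻¹ *
        Real.exp (-(lam * wake z)/4) := by
  have hr : 0 < ‖z‖ := lt_of_lt_of_le hS hz
  have hz0 : z ≠ 0 := norm_pos_iff.1 hr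
  have hq : 0 ≤ wake z := wake_nonneg z
  refine (vnorm_grad_le lam hlam z hz0).trans ?_
  have he : -(lam * ‖z‖ + lam * z 0)/2 = -(lam * wake z)/4 + -(lam * wake z)/4 := by
    rw [wake]; ring
  rw [he, Real.exp_add]
  set E := Real.exp (-(lam * wake z)/4) with hE
  have hEpos : 0 < E := Real.exp_pos _
  have hE1 : E ≤ 1 := Real.exp_le_one_iff.2 (by
    apply div_nonpos_of_nonpos_of_nonneg
    · simp [mul_nonneg hlam.le hq]
    · norm_num)
  have hsr : Real.sqrt ‖z‖ * Real.sqrt ‖z‖ = ‖z‖ := Real.mul_self_sqrt hr.le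
  have hsrpos : 0 < Real.sqrt ‖z‖ := Real.sqrt_pos.2 hr
  have hS0pos : 0 < Real.sqrt S₀ := Real.sqrt_pos.2 hS
  have hss : Real.sqrt S₀ ≤ Real.sqrt ‖z‖ := Real.sqrt_le_sqrt hz
  have h1 : E * (‖z‖^2)⁻¹ ≤ (Real.sqrt S₀)⁻¹ * (‖z‖ * Real.sqrt ‖z‖)⁻¹ := by
    have ha : (Real.sqrt S₀)⁻¹ * (‖z‖ * Real.sqrt ‖z‖)⁻¹ = (Real.sqrt S₀ * (‖z‖ * Real.sqrt ‖z‖))⁻¹ := by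
      rw [mul_inv, mul_inv]
      ring
    have hb : Real.sqrt S₀ * (‖z‖ * Real.sqrt ‖z‖) ≤ ‖z‖^2 := by
      nlinarith [mul_le_mul_of_nonneg_right hss
        (by positivity : (0:ℝ) ≤ ‖z‖ * Real.sqrt ‖z‖)]
    calc E * (‖z‖^2)⁻¹ ≤ 1 * (‖z‖^2)⁻¹ := by gcongr
      _ = (‖z‖^2)⁻¹ := one_mul _
      _ ≤ (Real.sqrt S₀ * (‖z‖ * Real.sqrt ‖z‖))⁻¹ := by
          apply inv_anti₀ (by positivity) hb
      _ = (Real.sqrt S₀)⁻¹ * (‖z‖ * Real.sqrt ‖z‖)⁻¹ := ha.symm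
  have h2 : E * (lam/(2*‖z‖) * Real.sqrt (2 * wake z / ‖z‖)) ≤
      Real.sqrt lam * (‖z‖ * Real.sqrt ‖z‖)⁻¹ := by
    have hdiv : Real.sqrt (2 * wake z / ‖z‖) = Real.sqrt (2 * wake z) / Real.sqrt ‖z‖ := by
      rw [Real.sqrt_div (by positivity)]
    have htex : Real.sqrt (2 * wake z) * E ≤ 2 / Real.sqrt lam := by
      rw [hE]
      exact texp_le lam (wake z) hlam hq
    have hlpos : 0 < Real.sqrt lam := Real.sqrt_pos.2 hlam
    have hls : Real.sqrt lam * Real.sqrt lam = lam := Real.mul_self_sqrt hlam.le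
    have step : E * (lam/(2*‖z‖) * Real.sqrt (2 * wake z / ‖z‖)) =
        (Real.sqrt (2*wake z) * E) * (lam / (2*‖z‖*Real.sqrt ‖z‖)) := by
      rw [hdiv]; field_simp
    rw [step]
    calc (Real.sqrt (2*wake z) * E) * (lam / (2*‖z‖*Real.sqrt ‖z‖))
        ≤ (2 / Real.sqrt lam) * (lam / (2*‖z‖*Real.sqrt ‖z‖)) := by
          apply mul_le_mul_of_nonneg_right htex (by positivity)
      _ = Real.sqrt lam * (‖z‖ * Real.sqrt ‖z‖)⁻¹ := by
          field_simp
          linear_combination (-1 : ℝ) * hls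
  calc (4*Real.pi)⁻¹ * (E * E) * ((‖z‖^2)⁻¹ + lam/(2*‖z‖) * Real.sqrt (2 * wake z / ‖z‖))
      = ((4*Real.pi)⁻¹ * E) * (E * (‖z‖^2)⁻¹)
        + ((4*Real.pi)⁻¹ * E) * (E * (lam/(2*‖z‖) * Real.sqrt (2 * wake z / ‖z‖))) := by ring
    _ ≤ ((4*Real.pi)⁻¹ * E) * ((Real.sqrt S₀)⁻¹ * (‖z‖ * Real.sqrt ‖z‖)⁻¹)
        + ((4*Real.pi)⁻¹ * E) * (Real.sqrt lam * (‖z‖ * Real.sqrt ‖z‖)⁻¹) := by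
          have hA : (0:ℝ) ≤ (4*Real.pi)⁻¹ * E := by positivity
          exact add_le_add (mul_le_mul_of_nonneg_left h1 hA) (mul_le_mul_of_nonneg_left h2 hA)
    _ = (4*Real.pi)⁻¹ * ((Real.sqrt S₀)⁻¹ + Real.sqrt lam) * (‖z‖ * Real.sqrt ‖z‖)⁻¹ * E := by ring
lemma vnorm_nonneg (v : Fin 3 → ℝ) : 0 ≤ vnorm v := Real.sqrt_nonneg _
lemma vnorm_cross_le (a b : Fin 3 → ℝ) : vnorm (cross3 a b) ≤ vnorm a * vnorm b := by
  rw [vnorm, vnorm, vnorm, ← Real.sqrt_mul (by positivity)]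
  apply Real.sqrt_le_sqrt
  simp only [cross3, Fin.sum_univ_three, Matrix.cons_val_zero, Matrix.cons_val_one,
    Matrix.head_cons, Matrix.cons_val_two, Matrix.tail_cons]
  nlinarith [sq_nonneg (a 0 * b 0 + a 1 * b 1 + a 2 * b 2), sq_nonneg (a 0 * b 1 - a 1 * b 0),
    sq_nonneg (a 0 * b 2 - a 2 * b 0), sq_nonneg (a 1 * b 2 - a 2 * b 1)]
lemma abs_le_vnorm (v : Fin 3 → ℝ) (i : Fin 3) : |v i| ≤ vnorm v := by
  rw [vnorm, ← Real.sqrt_sq_eq_abs]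
  apply Real.sqrt_le_sqrt
  exact Finset.single_le_sum (f := fun j => v j ^ 2) (fun j _ => sq_nonneg _) (Finset.mem_univ i)
lemma vnorm_le_sum (v : Fin 3 → ℝ) : vnorm v ≤ |v 0| + |v 1| + |v 2| := by
  rw [vnorm]
  have h : ∑ i, v i ^ 2 ≤ (|v 0| + |v 1| + |v 2|)^2 := by
    simp only [Fin.sum_univ_three]
    nlinarith [abs_nonneg (v 0), abs_nonneg (v 1), abs_nonneg (v 2), sq_abs (v 0),
      sq_abs (v 1), sq_abs (v 2), mul_nonneg (abs_nonneg (v 0)) (abs_nonneg (v 1)),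
      mul_nonneg (abs_nonneg (v 0)) (abs_nonneg (v 2)),
      mul_nonneg (abs_nonneg (v 1)) (abs_nonneg (v 2))]
  calc Real.sqrt (∑ i, v i ^ 2) ≤ Real.sqrt ((|v 0| + |v 1| + |v 2|)^2) := Real.sqrt_le_sqrt h
    _ = |v 0| + |v 1| + |v 2| := Real.sqrt_sq (by positivity)
lemma cross3_zero (a : Fin 3 → ℝ) : cross3 a (fun _ => 0) = fun _ => 0 := by
  funext i
  fin_cases i <;> simp [cross3]
lemma vnorm_zero : vnorm (fun _ => 0) = 0 := by simp [vnorm]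
lemma wake_smul (lam : ℝ) (hlam : 0 ≤ lam) (x : E3) : wake (lam • x) = lam * wake x := by
  simp [wake, norm_smul, abs_of_nonneg hlam, PiLp.smul_apply, smul_eq_mul]
  ring
lemma rpow_neg32 (r : ℝ) (hr : 0 < r) : r ^ (-(3/2:ℝ)) = (r * Real.sqrt r)⁻¹ := by
  rw [Real.rpow_neg hr.le, show (3/2:ℝ) = 1 + 1/2 by norm_num, Real.rpow_add hr,
    Real.rpow_one, ← Real.sqrt_eq_rpow]
lemma vnorm_coords (w : E3) : vnorm (fun l => w l) = ‖w‖ := by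
  rw [vnorm_eq]; rfl

/-- **Convolution of `∇Φ₀ ∧ ·` with a compactly supported force:** if `F ∈ L¹(ℝ³)³` with
`supp F ⊂ B_{S₀}`, then for `|x| ≥ 2S₀`,
`|∫ ∇Φ₀(x−y) ∧ F(y) dy| ≤ C ‖F‖_{L¹} |x|^{−3/2} e^{−s(λx)/(4(1+S₀))}`. -/
theorem conv_grad_Phi0_compact_force (lam S₀ : ℝ) (hlam : 0 < lam) (hS₀ : 0 < S₀)
    (F : E3 → E3) (hF : Integrable F (volume : Measure E3))
    (hsupp : ∀ y : E3, S₀ ≤ ‖y‖ → F y = 0) :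
    ∃ C > 0, ∀ x : E3, 2 * S₀ ≤ ‖x‖ →
      vnorm (fun i => ∫ y : E3, cross3 (gradPhi0 lam (x - y)) (fun l => F y l) i) ≤
        C * (∫ y : E3, ‖F y‖) * ‖x‖ ^ (-(3/2 : ℝ)) *
          Real.exp (-(wake (lam • x)) / (4 * (1 + S₀))) := by
  have hS0pos : 0 < Real.sqrt S₀ := Real.sqrt_pos.2 hS₀
  set AB : ℝ := (4*Real.pi)⁻¹ * ((Real.sqrt S₀)⁻¹ + Real.sqrt lam) with hABdef
  have hABpos : 0 < AB := by
    apply mul_pos (by positivity)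
    exact add_pos_of_pos_of_nonneg (inv_pos.2 hS0pos) (Real.sqrt_nonneg _)
  refine ⟨3 * AB * (2*Real.sqrt 2) * Real.exp (lam*S₀/2), by positivity, ?_⟩
  intro x hx
  have hxpos : 0 < ‖x‖ := lt_of_lt_of_le (by positivity) hx
  set Ex : ℝ := Real.exp (-(wake (lam • x)) / (4*(1+S₀))) with hExdef
  have hExpos : 0 < Ex := Real.exp_pos _
  set M : ℝ := AB * (2*Real.sqrt 2) * Real.exp (lam*S₀/2) * (‖x‖*Real.sqrt ‖x‖)⁻¹ * Ex
    with hMdef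
  have hMpos : 0 < M := by positivity
  have key : ∀ y : E3, vnorm (cross3 (gradPhi0 lam (x-y)) (fun l => F y l)) ≤ M * ‖F y‖ := by
    intro y
    by_cases hy : S₀ ≤ ‖y‖
    · rw [hsupp y hy]
      have h0 : (fun l => (0:E3) l) = (fun _ => (0:ℝ)) := by funext l; rfl
      rw [h0, cross3_zero, vnorm_zero]
      simp
    · push_neg at hy
      have htri : |‖x‖ - ‖x-y‖| ≤ ‖y‖ := by
        have := abs_norm_sub_norm_le x (x-y)
        rwa [sub_sub_cancel] at this
      rw [abs_le] at htri
      have hz1 : S₀ ≤ ‖x-y‖ := by linarith [htri.1]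
      have hz2 : ‖x‖ ≤ 2 * ‖x-y‖ := by linarith [htri.1]
      have hzpos : 0 < ‖x-y‖ := lt_of_lt_of_le hS₀ hz1
      have hg := grad_decay lam hlam S₀ hS₀ (x-y) hz1
      -- wake comparison
      have hcoord : |y 0| ≤ ‖y‖ := coord_le_norm y 0
      have hsub0 : x 0 - (x-y) 0 = y 0 := by
        have : (x - y) 0 = x 0 - y 0 := rfl
        rw [this]; ring
      have hw : lam * wake x - lam * wake (x-y) ≤ 2 * lam * S₀ := by
        have h1 : wake x - wake (x-y) ≤ 2 * ‖y‖ := by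
          unfold wake
          have := abs_le.1 hcoord
          have h2 : x 0 - (x-y) 0 ≤ ‖y‖ := by rw [hsub0]; linarith [this.2]
          linarith [htri.1]
        nlinarith
      have hwx : 0 ≤ lam * wake x := mul_nonneg hlam.le (wake_nonneg x)
      have hexpc : Real.exp (-(lam * wake (x-y))/4) ≤ Real.exp (lam*S₀/2) * Ex := by
        rw [hExdef, wake_smul lam hlam.le x, ← Real.exp_add]
        apply Real.exp_le_exp.2
        have h3 : lam * wake x / (4*(1+S₀)) ≤ lam * wake x / 4 := by
          apply div_le_div_of_nonneg_left hwx (by norm_num) ?_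
          nlinarith
        have h4 : -(lam * wake (x-y))/4 ≤ lam*S₀/2 - (lam * wake x)/4 := by linarith
        have h6 : -(lam * wake x) / (4*(1+S₀)) = -(lam * wake x / (4*(1+S₀))) := by ring
        rw [h6]
        linarith
      -- inverse power comparison
      have hsq2 : Real.sqrt 2 * Real.sqrt 2 = 2 := Real.mul_self_sqrt (by norm_num)
      have hsx : Real.sqrt ‖x‖ * Real.sqrt ‖x‖ = ‖x‖ := Real.mul_self_sqrt hxpos.le
      have hinvc : (‖x-y‖ * Real.sqrt ‖x-y‖)⁻¹ ≤ (2*Real.sqrt 2) * (‖x‖*Real.sqrt ‖x‖)⁻¹ := by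
        have h0 : ‖x‖/2 ≤ ‖x-y‖ := by linarith
        have h1 : Real.sqrt (‖x‖/2) ≤ Real.sqrt ‖x-y‖ := Real.sqrt_le_sqrt h0
        have h2 : (‖x‖/2) * Real.sqrt (‖x‖/2) ≤ ‖x-y‖ * Real.sqrt ‖x-y‖ := by
          apply mul_le_mul h0 h1 (Real.sqrt_nonneg _) hzpos.le
        have h3 : (‖x-y‖ * Real.sqrt ‖x-y‖)⁻¹ ≤ ((‖x‖/2) * Real.sqrt (‖x‖/2))⁻¹ := by
          apply inv_anti₀ (by positivity) h2
        refine h3.trans (le_of_eq ?_)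
        rw [Real.sqrt_div hxpos.le]
        have hs2pos : (0:ℝ) < Real.sqrt 2 := by positivity
        field_simp
      have hvF : vnorm (fun l => F y l) = ‖F y‖ := vnorm_coords (F y)
      calc vnorm (cross3 (gradPhi0 lam (x-y)) (fun l => F y l))
          ≤ vnorm (gradPhi0 lam (x-y)) * vnorm (fun l => F y l) := vnorm_cross_le _ _
        _ = vnorm (gradPhi0 lam (x-y)) * ‖F y‖ := by rw [hvF]
        _ ≤ M * ‖F y‖ := by
            apply mul_le_mul_of_nonneg_right ?_ (norm_nonneg _)
            refine hg.trans ?_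
            have step : AB * (‖x-y‖ * Real.sqrt ‖x-y‖)⁻¹ * Real.exp (-(lam * wake (x-y))/4)
                ≤ AB * ((2*Real.sqrt 2) * (‖x‖*Real.sqrt ‖x‖)⁻¹) *
                  (Real.exp (lam*S₀/2) * Ex) := by
              apply mul_le_mul ?_ hexpc (Real.exp_nonneg _) ?_
              · exact mul_le_mul_of_nonneg_left hinvc hABpos.le
              · positivity
            refine le_trans (le_of_eq ?_) (step.trans (le_of_eq ?_))
            · rw [hABdef]
            · rw [hMdef]; ring
  have hIbound : ∀ i : Fin 3,
      |∫ y : E3, cross3 (gradPhi0 lam (x-y)) (fun l => F y l) i| ≤ M * ∫ y : E3, ‖F y‖ := by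
    intro i
    have h1 : |∫ y : E3, cross3 (gradPhi0 lam (x-y)) (fun l => F y l) i|
        ≤ ∫ y : E3, |cross3 (gradPhi0 lam (x-y)) (fun l => F y l) i| := by
      have := norm_integral_le_integral_norm
        (fun y : E3 => cross3 (gradPhi0 lam (x-y)) (fun l => F y l) i) (μ := volume)
      simpa [Real.norm_eq_abs] using this
    have h2 : ∫ y : E3, |cross3 (gradPhi0 lam (x-y)) (fun l => F y l) i|
        ≤ ∫ y : E3, M * ‖F y‖ := by
      apply integral_mono_of_nonneg (ae_of_all _ fun y => abs_nonneg _)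
        (hF.norm.const_mul M)
      exact ae_of_all _ fun y => (abs_le_vnorm _ i).trans (key y)
    rw [integral_const_mul] at h2
    exact h1.trans h2
  refine (vnorm_le_sum _).trans ?_
  have hr32 : ‖x‖ ^ (-(3/2:ℝ)) = (‖x‖ * Real.sqrt ‖x‖)⁻¹ := rpow_neg32 _ hxpos
  have hrhs : 3 * AB * (2*Real.sqrt 2) * Real.exp (lam*S₀/2) * (∫ y : E3, ‖F y‖) *
      ‖x‖ ^ (-(3/2:ℝ)) * Ex = 3 * (M * ∫ y : E3, ‖F y‖) := by
    rw [hr32, hMdef]; ring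
  rw [hrhs]
  linarith [hIbound 0, hIbound 1, hIbound 2]

end
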